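/- arXiv:2510.00404 — 2 statements merged into one kernel-verified Lean document; each statement's English description precedes it below -/
import Mathlib

section
/- Let n be a positive integer, λ > 0, and u ∈ ℝⁿ. Define v ∈ ℝⁿ by vᵢ = uᵢ if uᵢ ≥ √(2λ) and vᵢ = 0 otherwise. Then v minimizes z ↦ (1/2)‖z − u‖₂² + λ·‖z‖₀ over the set {z ∈ ℝⁿ : zᵢ ≥ 0 for all i}, where ‖z‖₀ denotes the number of nonzero entries of z. -/
open Classical in
/-- The ℓ₀ "norm": the number of nonzero entries of a vector. -/
noncomputable def l0 {n : ℕ} (z : Fin n → ℝ) : ℕ :=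
  (Finset.univ.filter (fun i => z i ≠ 0)).card

open Classical in
lemma l0_cast {n : ℕ} (z : Fin n → ℝ) :
    (l0 z : ℝ) = ∑ i, (if z i ≠ 0 then (1:ℝ) else 0) := by
  simp [l0, Finset.card_filter]

open Classical in
lemma key_pt (lam u z : ℝ) (hlam : 0 < lam) (hz : 0 ≤ z) :
    (1/2) * ((if Real.sqrt (2 * lam) ≤ u then u else 0) - u)^2
      + lam * (if (if Real.sqrt (2 * lam) ≤ u then u else 0) ≠ 0 then (1:ℝ) else 0)
    ≤ (1/2) * (z - u)^2 + lam * (if z ≠ 0 then (1:ℝ) else 0) := by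
  have h2 : (0:ℝ) ≤ 2 * lam := by linarith
  have hθsq : Real.sqrt (2 * lam) ^ 2 = 2 * lam := Real.sq_sqrt h2
  have hθpos : 0 < Real.sqrt (2 * lam) := Real.sqrt_pos.mpr (by linarith)
  by_cases h : Real.sqrt (2 * lam) ≤ u
  · have hu : u ≠ 0 := by nlinarith
    simp only [h, if_true, ne_eq, hu, not_false_eq_true, if_true, sub_self]
    by_cases hz0 : z = 0
    · subst hz0; simp only [ne_eq, not_true_eq_false, if_false]
      nlinarith
    · simp only [ne_eq, hz0, not_false_eq_true, if_true]
      nlinarith [sq_nonneg (z - u)]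
  · simp only [h, if_false, ne_eq, not_true_eq_false, if_false]
    by_cases hz0 : z = 0
    · subst hz0; simp
    · have hzpos : 0 < z := lt_of_le_of_ne hz (Ne.symm hz0)
      have hu : u < Real.sqrt (2 * lam) := not_le.mp h
      simp only [hz0, if_true, not_false_eq_true]
      by_cases hu0 : u ≤ 0
      · nlinarith [sq_nonneg (z - u), mul_nonneg hz (neg_nonneg.mpr hu0)]
      · push_neg at hu0
        nlinarith [sq_nonneg (z - u), mul_pos (sub_pos.mpr hu) (by linarith : 0 < Real.sqrt (2 * lam) + u)]

/-- Case II of Lemma 1 (vector form): the componentwise JumpReLU with threshold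
`√(2λ)`, i.e. `vᵢ = uᵢ` if `uᵢ ≥ √(2λ)` and `vᵢ = 0` otherwise, minimizes
`z ↦ (1/2)‖z-u‖₂² + λ‖z‖₀` over the nonnegative orthant. -/
theorem stmt_4 (n : ℕ) (hn : 0 < n) (lam : ℝ) (hlam : 0 < lam) (u : Fin n → ℝ) :
    ∀ z : Fin n → ℝ, (∀ i, 0 ≤ z i) →
      (1/2) * ∑ i, ((if Real.sqrt (2 * lam) ≤ u i then u i else 0) - u i)^2
          + lam * (l0 (fun i => if Real.sqrt (2 * lam) ≤ u i then u i else 0) : ℝ)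
        ≤ (1/2) * ∑ i, (z i - u i)^2 + lam * (l0 z : ℝ) := by
  classical
  intro z hz
  rw [l0_cast, l0_cast, Finset.mul_sum, Finset.mul_sum, Finset.mul_sum, Finset.mul_sum,
    ← Finset.sum_add_distrib, ← Finset.sum_add_distrib]
  exact Finset.sum_le_sum fun i _ => key_pt lam (u i) (z i) hlam (hz i)
end

section
/- Let n ≥ k ≥ 1 be integers and u ∈ ℝⁿ. Among all index sets S ⊆ {1,…,n} with |S| ≤ k, the quantity Σ_{i∉S} uᵢ² + Σ_{i∈S} min(uᵢ, 0)² is minimized by any set T of exactly k indices satisfying uᵢ ≥ uⱼ for every i ∈ T and j ∉ T (i.e., T consists of k largest entries of u). -/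
private lemma sq_split (x : ℝ) : x^2 = (min x 0)^2 + (max x 0)^2 := by
  rcases le_total x 0 with h | h
  · rw [min_eq_left h, max_eq_right h]; ring
  · rw [min_eq_right h, max_eq_left h]; ring

private lemma obj_eq (n : ℕ) (u : Fin n → ℝ) (S : Finset (Fin n)) :
    ∑ i ∈ Sᶜ, (u i)^2 + ∑ i ∈ S, (min (u i) 0)^2
      = ∑ i : Fin n, (min (u i) 0)^2 + ∑ i ∈ Sᶜ, (max (u i) 0)^2 := by
  have h1 : ∑ i ∈ Sᶜ, (u i)^2
      = ∑ i ∈ Sᶜ, (min (u i) 0)^2 + ∑ i ∈ Sᶜ, (max (u i) 0)^2 := by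
    rw [← Finset.sum_add_distrib]
    exact Finset.sum_congr rfl fun i _ => sq_split (u i)
  rw [h1]
  have h2 : ∑ i ∈ Sᶜ, (min (u i) 0)^2 + ∑ i ∈ S, (min (u i) 0)^2
      = ∑ i : Fin n, (min (u i) 0)^2 := by
    rw [add_comm, Finset.sum_add_sum_compl]
  linarith

/-- Support-selection step for Case III of Lemma 1 (TopK): among all index sets
`S` with `|S| ≤ k`, the residual objective `∑_{i∉S} uᵢ² + ∑_{i∈S} min(uᵢ,0)²` is
minimized by any set `T` of exactly `k` largest entries of `u`. -/
theorem stmt_13 (n k : ℕ) (hk : 1 ≤ k) (hkn : k ≤ n) (u : Fin n → ℝ)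
    (T : Finset (Fin n)) (hT : T.card = k)
    (hTop : ∀ i ∈ T, ∀ j ∉ T, u j ≤ u i) :
    ∀ S : Finset (Fin n), S.card ≤ k →
      ∑ i ∈ Tᶜ, (u i)^2 + ∑ i ∈ T, (min (u i) 0)^2
        ≤ ∑ i ∈ Sᶜ, (u i)^2 + ∑ i ∈ S, (min (u i) 0)^2 := by
  intro S hS
  rw [obj_eq, obj_eq]
  set f : Fin n → ℝ := fun i => (max (u i) 0)^2 with hf
  have hfnn : ∀ i, 0 ≤ f i := fun i => sq_nonneg _
  -- suffices ∑_{S} f ≤ ∑_{T} f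
  have key : ∑ i ∈ S, f i ≤ ∑ i ∈ T, f i := by
    have hsplitS : ∑ i ∈ S ∩ T, f i + ∑ i ∈ S \ T, f i = ∑ i ∈ S, f i :=
      Finset.sum_inter_add_sum_sdiff S T f
    have hsplitT : ∑ i ∈ T ∩ S, f i + ∑ i ∈ T \ S, f i = ∑ i ∈ T, f i :=
      Finset.sum_inter_add_sum_sdiff T S f
    rw [← hsplitS, ← hsplitT, Finset.inter_comm S T]
    refine add_le_add le_rfl ?_
    -- ∑_{S \ T} f ≤ ∑_{T \ S} f
    have hcard : (S \ T).card ≤ (T \ S).card := by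
      have h1 := Finset.card_sdiff_add_card_inter S T
      have h2 := Finset.card_sdiff_add_card_inter T S
      rw [Finset.inter_comm] at h2
      omega
    rcases (S \ T).eq_empty_or_nonempty with he | hne
    · rw [he, Finset.sum_empty]
      exact Finset.sum_nonneg fun i _ => hfnn i
    · have hTne : (T \ S).Nonempty := by
        rw [← Finset.card_pos] at hne ⊢; omega
      obtain ⟨i0, hi0, hi0min⟩ := Finset.exists_min_image (T \ S) f hTne
      have hstep : ∀ j ∈ S \ T, f j ≤ f i0 := by
        intro j hj
        have hjT : j ∉ T := (Finset.mem_sdiff.mp hj).2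
        have hiT : i0 ∈ T := (Finset.mem_sdiff.mp hi0).1
        have := hTop i0 hiT j hjT
        have hmax : max (u j) 0 ≤ max (u i0) 0 := max_le_max this le_rfl
        exact pow_le_pow_left₀ (le_max_right _ _) hmax 2
      calc ∑ j ∈ S \ T, f j ≤ ∑ _j ∈ S \ T, f i0 :=
            Finset.sum_le_sum hstep
        _ = (S \ T).card • f i0 := by rw [Finset.sum_const]
        _ ≤ (T \ S).card • f i0 := by
            apply nsmul_le_nsmul_left (hfnn i0) hcard
        _ = ∑ _i ∈ T \ S, f i0 := by rw [Finset.sum_const]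
        _ ≤ ∑ i ∈ T \ S, f i := Finset.sum_le_sum fun i hi => hi0min i hi
  -- convert complement sums
  have hTc : ∑ i ∈ Tᶜ, f i = ∑ i : Fin n, f i - ∑ i ∈ T, f i := by
    rw [eq_sub_iff_add_eq, Finset.sum_compl_add_sum]
  have hSc : ∑ i ∈ Sᶜ, f i = ∑ i : Fin n, f i - ∑ i ∈ S, f i := by
    rw [eq_sub_iff_add_eq, Finset.sum_compl_add_sum]
  simp only [hf] at hTc hSc
  linarith
end
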